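/- arXiv:1411.0764 — 2 statements merged into one kernel-verified Lean document; each statement's English description precedes it below -/
import Mathlib

section
/- For every d ∈ ℝ^m satisfying the constraints Lᵀ d = 0, the penalized least squares objective satisfies the exact decomposition F(d) = F(d̃) + (d − d̃)ᵀ B⁻¹ (d − d̃), where d̃ = B(b − L Λ̂) and Λ̂ = (Lᵀ B L)⁻¹ Lᵀ B b. -/
open Matrix

private lemma vmv_mulVec {k : ℕ} (w v d : Fin k → ℝ) :
    vecMulVec w v *ᵥ d = (v ⬝ᵥ d) • w := by
  funext i
  simp only [vecMulVec_apply, mulVec, dotProduct, Pi.smul_apply, smul_eq_mul, Finset.sum_mul]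
  exact Finset.sum_congr rfl fun j _ => by ring

private lemma sum_mulVec' {n k : ℕ} (M : Fin n → Matrix (Fin k) (Fin k) ℝ) (d : Fin k → ℝ) :
    (∑ i, M i) *ᵥ d = ∑ i, M i *ᵥ d := by
  funext j
  simp only [mulVec, dotProduct, Finset.sum_apply, Finset.sum_mul, Matrix.sum_apply]
  rw [Finset.sum_comm]

private lemma dot_sum' {n k : ℕ} (d : Fin k → ℝ) (v : Fin n → Fin k → ℝ) :
    d ⬝ᵥ (∑ i, v i) = ∑ i, d ⬝ᵥ v i := by
  simp only [dotProduct, Finset.sum_apply, Finset.mul_sum]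
  rw [Finset.sum_comm]

private lemma sum_dot' {n k : ℕ} (d : Fin k → ℝ) (v : Fin n → Fin k → ℝ) :
    (∑ i, v i) ⬝ᵥ d = ∑ i, v i ⬝ᵥ d := by
  simp only [dotProduct, Finset.sum_apply, Finset.sum_mul]
  rw [Finset.sum_comm]

/-- For every d satisfying Lᵀ d = 0, the penalized least squares objective satisfies
F(d) = F(d̃) + (d − d̃)ᵀ B⁻¹ (d − d̃), where d̃ = B(b − L Λ̂), Λ̂ = (Lᵀ B L)⁻¹ Lᵀ B b. -/
theorem stmt6 (n m J : ℕ) (hn : 0 < n) (hm : 0 < m) (hJ : 0 < J) (hJm : J ≤ m)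
    (y : Fin n → ℝ) (X : Fin n → (Fin m → ℝ))
    (Ω : Matrix (Fin m) (Fin m) ℝ) (hΩ : Ω.PosDef)
    (σ2 lam : ℝ) (hσ : 0 < σ2) (hlam : 0 < lam)
    (F : (Fin m → ℝ) → ℝ)
    (hF : ∀ d, F d = σ2⁻¹ * ∑ i, (y i - X i ⬝ᵥ d) ^ 2 + lam * (d ⬝ᵥ (Ω *ᵥ d)))
    (Binv B : Matrix (Fin m) (Fin m) ℝ)
    (hBinv : Binv = lam • Ω + σ2⁻¹ • ∑ i, vecMulVec (X i) (X i))
    (hB : B = Binv⁻¹)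
    (b : Fin m → ℝ) (hb : b = σ2⁻¹ • ∑ i, y i • X i)
    (L : Matrix (Fin m) (Fin J) ℝ) (hL : L.rank = J)
    (Lamhat : Fin J → ℝ)
    (hLamhat : Lamhat = (Lᵀ * B * L)⁻¹ *ᵥ (Lᵀ *ᵥ (B *ᵥ b)))
    (dtilde : Fin m → ℝ) (hdtilde : dtilde = B *ᵥ (b - L *ᵥ Lamhat)) :
    ∀ d, Lᵀ *ᵥ d = 0 →
      F d = F dtilde + (d - dtilde) ⬝ᵥ (Binv *ᵥ (d - dtilde)) := by
  -- quadratic form of Binv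
  have hq : ∀ d : Fin m → ℝ,
      d ⬝ᵥ (Binv *ᵥ d) = lam * (d ⬝ᵥ (Ω *ᵥ d)) + σ2⁻¹ * ∑ i, (X i ⬝ᵥ d) ^ 2 := by
    intro d
    rw [hBinv, Matrix.add_mulVec, smul_mulVec, smul_mulVec, sum_mulVec']
    rw [dotProduct_add, dotProduct_smul, dotProduct_smul,
      dot_sum' d (fun i => vecMulVec (X i) (X i) *ᵥ d)]
    have hterm : ∀ i : Fin n, d ⬝ᵥ (vecMulVec (X i) (X i) *ᵥ d) = (X i ⬝ᵥ d) ^ 2 := by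
      intro i
      rw [vmv_mulVec, dotProduct_smul, smul_eq_mul, dotProduct_comm d (X i)]
      ring
    rw [Finset.sum_congr rfl fun i _ => hterm i]
    simp only [smul_eq_mul]
  -- linear part
  have hbd : ∀ d : Fin m → ℝ, b ⬝ᵥ d = σ2⁻¹ * ∑ i, y i * (X i ⬝ᵥ d) := by
    intro d
    rw [hb, smul_dotProduct, sum_dot', smul_eq_mul]
    congr 1
    exact Finset.sum_congr rfl fun i _ => by rw [smul_dotProduct, smul_eq_mul]
  -- F as quadratic
  have hFq : ∀ d : Fin m → ℝ,
      F d = d ⬝ᵥ (Binv *ᵥ d) - 2 * (b ⬝ᵥ d) + σ2⁻¹ * ∑ i, (y i) ^ 2 := by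
    intro d
    rw [hF, hq, hbd]
    have : ∑ i, (y i - X i ⬝ᵥ d) ^ 2
        = ∑ i, ((y i) ^ 2 - 2 * (y i * (X i ⬝ᵥ d)) + (X i ⬝ᵥ d) ^ 2) :=
      Finset.sum_congr rfl fun i _ => by ring
    rw [this, Finset.sum_add_distrib, Finset.sum_sub_distrib]
    have h2 : ∑ i, 2 * (y i * (X i ⬝ᵥ d)) = 2 * ∑ i, y i * (X i ⬝ᵥ d) :=
      (Finset.mul_sum _ _ _).symm
    rw [h2]
    ring
  -- symmetry of Binv
  have hBt : Binvᵀ = Binv := by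
    rw [hBinv]
    have hΩt : Ωᵀ = Ω := by
      have h := hΩ.1.eq
      rwa [conjTranspose_eq_transpose_of_trivial] at h
    have hΩe : ∀ a c, Ω a c = Ω c a := fun a c => by
      conv_lhs => rw [← hΩt]
      exact Matrix.transpose_apply Ω a c
    funext i j
    simp only [transpose_apply, Matrix.add_apply, Matrix.smul_apply, Matrix.sum_apply,
      vecMulVec_apply, smul_eq_mul]
    have hs : ∑ x, X x j * X x i = ∑ x, X x i * X x j :=
      Finset.sum_congr rfl fun k _ => mul_comm _ _
    rw [hs, hΩe j i]
  have hHerm : Binv.IsHermitian := by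
    rw [Matrix.IsHermitian, conjTranspose_eq_transpose_of_trivial, hBt]
  -- positive definiteness of Binv
  have hPD : Binv.PosDef := by
    refine Matrix.PosDef.of_dotProduct_mulVec_pos hHerm fun x hx => ?_
    have hsx : star x = x := by funext i; simp
    rw [hsx, hq]
    have h1 : 0 < lam * (x ⬝ᵥ (Ω *ᵥ x)) := by
      have := hΩ.dotProduct_mulVec_pos hx
      rw [hsx] at this
      exact mul_pos hlam this
    have h2 : 0 ≤ σ2⁻¹ * ∑ i, (X i ⬝ᵥ x) ^ 2 :=
      mul_nonneg (inv_nonneg.mpr hσ.le) (Finset.sum_nonneg fun i _ => sq_nonneg _)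
    linarith
  have hdet : IsUnit Binv.det := hPD.det_pos.ne'.isUnit
  have hBinvB : Binv * B = 1 := by rw [hB]; exact Matrix.mul_nonsing_inv _ hdet
  have hBPD : B.PosDef := hB ▸ hPD.inv
  -- injectivity of L
  have hLinj : ∀ x : Fin J → ℝ, x ≠ 0 → L *ᵥ x ≠ 0 := by
    intro x hx
    have hker : LinearMap.ker L.mulVecLin = ⊥ := by
      have hrn := LinearMap.finrank_range_add_finrank_ker L.mulVecLin
      have hrank : Module.finrank ℝ (LinearMap.range L.mulVecLin) = J := hL
      rw [hrank] at hrn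
      have : Module.finrank ℝ (Fin J → ℝ) = J := by simp
      rw [this] at hrn
      have h0 : Module.finrank ℝ (LinearMap.ker L.mulVecLin) = 0 := by omega
      exact Submodule.finrank_eq_zero.mp h0
    intro h
    exact hx (LinearMap.ker_eq_bot.mp hker (by simpa using h))
  -- Lᵀ B L is positive definite
  have hLBL : (Lᵀ * B * L).PosDef := by
    refine Matrix.PosDef.of_dotProduct_mulVec_pos ?_ ?_
    · rw [Matrix.IsHermitian, conjTranspose_eq_transpose_of_trivial]
      rw [Matrix.transpose_mul, Matrix.transpose_mul, transpose_transpose]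
      have hBsym : Bᵀ = B := by
        have h := hBPD.1.eq
        rwa [conjTranspose_eq_transpose_of_trivial] at h
      rw [hBsym, Matrix.mul_assoc]
    · intro x hx
      have hsx : star x = x := by funext i; simp
      rw [hsx]
      have : (Lᵀ * B * L) *ᵥ x = Lᵀ *ᵥ (B *ᵥ (L *ᵥ x)) := by
        rw [mulVec_mulVec, mulVec_mulVec]
      rw [this, dotProduct_mulVec, vecMul_transpose]
      have := hBPD.dotProduct_mulVec_pos (hLinj x hx)
      have hsLx : star (L *ᵥ x) = L *ᵥ x := by funext i; simp
      rwa [hsLx] at this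
  have hLBLdet : IsUnit (Lᵀ * B * L).det := hLBL.det_pos.ne'.isUnit
  have hLBL1 : (Lᵀ * B * L) * (Lᵀ * B * L)⁻¹ = 1 := Matrix.mul_nonsing_inv _ hLBLdet
  -- Binv dtilde = b - L Λ̂
  have hBinvdt : Binv *ᵥ dtilde = b - L *ᵥ Lamhat := by
    rw [hdtilde, mulVec_mulVec, hBinvB, one_mulVec]
  -- Lᵀ dtilde = 0
  have hLdt : Lᵀ *ᵥ dtilde = 0 := by
    rw [hdtilde, hLamhat]
    simp only [Matrix.mulVec_sub, mulVec_mulVec]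
    have key : Lᵀ * (B * (L * ((Lᵀ * B * L)⁻¹ * (Lᵀ * B)))) = Lᵀ * B := by
      simp only [← Matrix.mul_assoc]
      rw [hLBL1, Matrix.one_mul]
    rw [key, sub_self]
  -- symmetry of the bilinear form
  have hsymdot : ∀ u v : Fin m → ℝ, u ⬝ᵥ (Binv *ᵥ v) = v ⬝ᵥ (Binv *ᵥ u) := by
    intro u v
    rw [dotProduct_mulVec, ← mulVec_transpose, hBt, dotProduct_comm]
  -- main computation
  intro d hd
  have h1 : d ⬝ᵥ (L *ᵥ Lamhat) = 0 := by
    rw [dotProduct_mulVec, ← mulVec_transpose, hd, zero_dotProduct]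
  have h2 : dtilde ⬝ᵥ (L *ᵥ Lamhat) = 0 := by
    rw [dotProduct_mulVec, ← mulVec_transpose, hLdt, zero_dotProduct]
  have e1 : d ⬝ᵥ (Binv *ᵥ dtilde) = d ⬝ᵥ b := by
    rw [hBinvdt, dotProduct_sub, h1, sub_zero]
  have e2 : dtilde ⬝ᵥ (Binv *ᵥ d) = d ⬝ᵥ b := by rw [hsymdot dtilde d, e1]
  have e3 : dtilde ⬝ᵥ (Binv *ᵥ dtilde) = dtilde ⬝ᵥ b := by
    rw [hBinvdt, dotProduct_sub, h2, sub_zero]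
  rw [hFq d, hFq dtilde]
  have hexp : (d - dtilde) ⬝ᵥ (Binv *ᵥ (d - dtilde))
      = d ⬝ᵥ (Binv *ᵥ d) - d ⬝ᵥ (Binv *ᵥ dtilde) - dtilde ⬝ᵥ (Binv *ᵥ d)
        + dtilde ⬝ᵥ (Binv *ᵥ dtilde) := by
    rw [Matrix.mulVec_sub, dotProduct_sub, sub_dotProduct, sub_dotProduct]
    ring
  rw [hexp, e1, e2, e3, dotProduct_comm b d, dotProduct_comm b dtilde]
  ring
end

section
/- If X is uniformly distributed on the interval (ℓ, u), then the random variable λ = X⁻² has a distribution absolutely continuous with respect to Lebesgue measure, with density λ ↦ (2(u − ℓ))⁻¹ λ^{−3/2} on the interval (u⁻², ℓ⁻²) and 0 elsewhere. Equivalently, the pushforward of the uniform probability measure on (ℓ, u) under the map x ↦ x⁻² equals the measure with this density. -/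
open MeasureTheory Set

private lemma aux_lint (k p q : ℝ) (hk : 0 ≤ k) (hp : 0 < p) (hpq : p ≤ q) :
    ∫⁻ t in Set.Ioc p q, ENNReal.ofReal (k * t ^ (-(3:ℝ)/2)) =
    ENNReal.ofReal (k * (2 * (p ^ (-(1:ℝ)/2) - q ^ (-(1:ℝ)/2)))) := by
  have hcont : ContinuousOn (fun t : ℝ => k * t ^ (-(3:ℝ)/2)) (Set.Icc p q) :=
    (continuousOn_const.mul (continuousOn_id.rpow_const fun x hx =>
      Or.inl (ne_of_gt (lt_of_lt_of_le hp hx.1))))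
  have hint : IntegrableOn (fun t : ℝ => k * t ^ (-(3:ℝ)/2)) (Set.Ioc p q) :=
    (hcont.integrableOn_Icc).mono_set Set.Ioc_subset_Icc_self
  have hnot : (0:ℝ) ∉ Set.uIcc p q := by
    rw [Set.uIcc_of_le hpq]
    exact fun h => absurd h.1 (not_le.mpr hp)
  rw [← ofReal_integral_eq_lintegral_ofReal hint]
  · congr 1
    rw [← intervalIntegral.integral_of_le hpq, intervalIntegral.integral_const_mul,
      integral_rpow (Or.inr ⟨by norm_num, hnot⟩),
      show (-(3:ℝ)/2 + 1) = -(1:ℝ)/2 by norm_num]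
    ring
  · refine (ae_restrict_iff' measurableSet_Ioc).mpr (Filter.Eventually.of_forall fun t ht => ?_)
    have : (0:ℝ) < t := hp.trans ht.1
    positivity

private lemma aux_val (x : ℝ) (hx : 0 < x) : ((x^2)⁻¹ : ℝ) ^ (-(1:ℝ)/2) = x := by
  have h : ((x^2)⁻¹ : ℝ) = x ^ (-2 : ℝ) := by rw [Real.rpow_neg hx.le, Real.rpow_two]
  rw [h, ← Real.rpow_mul hx.le]
  norm_num

private lemma aux_iff (a x : ℝ) (ha : 0 < a) (hx : 0 < x) :
    ((x^2)⁻¹ ≤ a) ↔ a ^ (-(1:ℝ)/2) ≤ x := by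
  rw [inv_le_comm₀ (by positivity) ha]
  have h2 : (a ^ (-(1:ℝ)/2)) ^ 2 = a⁻¹ := by
    rw [← Real.rpow_two, ← Real.rpow_mul ha.le]
    norm_num [Real.rpow_neg_one]
  rw [← h2, pow_le_pow_iff_left₀ (by positivity) hx.le two_ne_zero]

private lemma aux_anti {x y : ℝ} (hx : 0 < x) (hxy : x < y) : ((y:ℝ)^2)⁻¹ < (x^2)⁻¹ := by
  have h : x^2 < y^2 := by nlinarith
  exact inv_strictAnti₀ (by positivity) h

/-- If X is uniformly distributed on (ℓ, u), then λ = X⁻² has density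
λ ↦ (2(u − ℓ))⁻¹ λ^(−3/2) on (u⁻², ℓ⁻²) and 0 elsewhere: the pushforward of the
uniform probability measure on (ℓ, u) under x ↦ x⁻² equals the measure with this
density. -/
theorem stmt16 (ℓ u : ℝ) (h0 : 0 < ℓ) (hlu : ℓ < u) :
    Measure.map (fun x : ℝ => (x ^ 2)⁻¹)
        ((ENNReal.ofReal (u - ℓ))⁻¹ • volume.restrict (Set.Ioo ℓ u)) =
      volume.withDensity
        (Set.indicator (Set.Ioo (u ^ 2)⁻¹ (ℓ ^ 2)⁻¹)
          (fun t => ENNReal.ofReal ((2 * (u - ℓ))⁻¹ * t ^ (-(3 : ℝ) / 2)))) := by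
  have hu : 0 < u := h0.trans hlu
  have hul : 0 < u - ℓ := sub_pos.mpr hlu
  have hmeas : Measurable fun x : ℝ => (x ^ 2)⁻¹ := (measurable_id.pow_const 2).inv
  have hlt : ((u:ℝ)^2)⁻¹ < (ℓ^2)⁻¹ := aux_anti h0 hlu
  have hp : (0:ℝ) < (u^2)⁻¹ := by positivity
  haveI : IsFiniteMeasure (Measure.map (fun x : ℝ => (x ^ 2)⁻¹)
      ((ENNReal.ofReal (u - ℓ))⁻¹ • volume.restrict (Set.Ioo ℓ u))) := by
    constructor
    rw [Measure.map_apply hmeas MeasurableSet.univ, Measure.smul_apply, smul_eq_mul,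
      Measure.restrict_apply (hmeas MeasurableSet.univ)]
    simp only [Set.univ_inter, Set.preimage_univ, Real.volume_Ioo]
    exact ENNReal.mul_lt_top (by simp [hlu]) ENNReal.ofReal_lt_top
  refine Measure.ext_of_Iic _ _ (fun a => ?_)
  rw [Measure.map_apply hmeas measurableSet_Iic, Measure.smul_apply, smul_eq_mul,
    Measure.restrict_apply (hmeas measurableSet_Iic),
    withDensity_apply _ measurableSet_Iic, lintegral_indicator measurableSet_Ioo _,
    Measure.restrict_restrict measurableSet_Ioo]
  by_cases h1 : a ≤ (u^2)⁻¹
  · have e1 : (fun x : ℝ => (x ^ 2)⁻¹) ⁻¹' Set.Iic a ∩ Set.Ioo ℓ u = ∅ := by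
      ext x
      simp only [Set.mem_inter_iff, Set.mem_preimage, Set.mem_Iic, Set.mem_Ioo,
        Set.mem_empty_iff_false, iff_false, not_and]
      intro hxa hx1 hx2
      have := aux_anti (h0.trans hx1) hx2
      linarith
    have e2 : Set.Ioo ((u:ℝ)^2)⁻¹ ((ℓ:ℝ)^2)⁻¹ ∩ Set.Iic a = ∅ := by
      ext t
      simp only [Set.mem_inter_iff, Set.mem_Ioo, Set.mem_Iic, Set.mem_empty_iff_false,
        iff_false, not_and]
      rintro ⟨ht1, _⟩ ht2
      linarith
    rw [e1, e2]
    simp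
  · push_neg at h1
    have ha : 0 < a := hp.trans h1
    set c : ℝ := a ^ (-(1:ℝ)/2) with hc
    have hc0 : 0 < c := by positivity
    by_cases h2 : a < (ℓ^2)⁻¹
    · have hlc : ℓ < c := by
        by_contra h
        push_neg at h
        have := (aux_iff a ℓ ha h0).mpr h
        linarith
      have e1 : (fun x : ℝ => (x ^ 2)⁻¹) ⁻¹' Set.Iic a ∩ Set.Ioo ℓ u = Set.Ico c u := by
        ext x
        simp only [Set.mem_inter_iff, Set.mem_preimage, Set.mem_Iic, Set.mem_Ioo, Set.mem_Ico]
        constructor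
        · rintro ⟨hxa, hx1, hx2⟩
          exact ⟨(aux_iff a x ha (h0.trans hx1)).mp hxa, hx2⟩
        · rintro ⟨hx1, hx2⟩
          exact ⟨(aux_iff a x ha (hc0.trans_le hx1)).mpr hx1, hlc.trans_le hx1, hx2⟩
      have e2 : Set.Ioo ((u:ℝ)^2)⁻¹ ((ℓ:ℝ)^2)⁻¹ ∩ Set.Iic a = Set.Ioc ((u:ℝ)^2)⁻¹ a := by
        ext t
        simp only [Set.mem_inter_iff, Set.mem_Ioo, Set.mem_Iic, Set.mem_Ioc]
        exact ⟨fun ⟨⟨h1', _⟩, h3⟩ => ⟨h1', h3⟩, fun ⟨h1', h3⟩ => ⟨⟨h1', h3.trans_lt h2⟩, h3⟩⟩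
      rw [e1, e2, aux_lint _ _ _ (by positivity) hp h1.le, Real.volume_Ico, aux_val u hu]
      rw [← ENNReal.ofReal_inv_of_pos hul, ← ENNReal.ofReal_mul (by positivity)]
      congr 1
      rw [hc]
      field_simp
    · push_neg at h2
      have e1 : (fun x : ℝ => (x ^ 2)⁻¹) ⁻¹' Set.Iic a ∩ Set.Ioo ℓ u = Set.Ioo ℓ u := by
        refine Set.inter_eq_right.mpr fun x hx => ?_
        have := aux_anti h0 hx.1
        exact le_trans (le_of_lt this) h2
      have e2 : Set.Ioo ((u:ℝ)^2)⁻¹ ((ℓ:ℝ)^2)⁻¹ ∩ Set.Iic a = Set.Ioo ((u:ℝ)^2)⁻¹ ((ℓ:ℝ)^2)⁻¹ := by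
        refine Set.inter_eq_left.mpr fun t ht => le_trans (le_of_lt ht.2) h2
      rw [e1, e2, setLIntegral_congr Ioo_ae_eq_Ioc,
        aux_lint _ _ _ (by positivity) hp hlt.le, Real.volume_Ioo, aux_val u hu, aux_val ℓ h0,
        show ((2*(u-ℓ))⁻¹ * (2 * (u - ℓ)) : ℝ) = 1 by field_simp]
      rw [ENNReal.ofReal_one]
      exact ENNReal.inv_mul_cancel (ENNReal.ofReal_pos.mpr hul).ne' ENNReal.ofReal_ne_top
end
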